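/- Let q be a prime power and t a positive integer. The number N_q(t) of monic irreducible binomials x^t - a of degree t in F_q[x] equals (φ(t)/t)·(q-1) if rad_4(t) divides q-1, and equals 0 otherwise. -/

import Mathlib

open Polynomial

/-- The radical of `n`: product of the distinct primes dividing `n`. -/
def rad (n : ℕ) : ℕ := ∏ p ∈ n.primeFactors, p

/-- `rad₄ n = rad n` if `4 ∤ n`, and `2 * rad n` otherwise. -/
def rad4 (n : ℕ) : ℕ := if 4 ∣ n then 2 * rad n else rad n

open IntermediateField AdjoinRoot

universe u

lemma two_pow_aux : ∀ (s : ℕ) {K : Type u} [Field K] {a : K},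
    (∃ i : K, i ^ 2 = -1) → (∀ b : K, b ^ 2 ≠ a) → Irreducible (X ^ (2 ^ s) - C a) := by
  intro s
  induction s with
  | zero => intro K _ a _ _; simpa using irreducible_X_sub_C a
  | succ s IH =>
    intro K _ a hi ha
    rw [pow_succ]
    apply X_pow_mul_sub_C_irreducible (X_pow_sub_C_irreducible_of_prime Nat.prime_two ha)
    intro E _ _ x hx
    have hint : IsIntegral K x := not_not.mp fun h ↦ by
      simpa only [degree_zero, degree_X_pow_sub_C (by norm_num : 0 < 2),
        WithBot.natCast_ne_bot] using congr_arg degree (hx.symm.trans (dif_neg h))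
    obtain ⟨i, hi⟩ := hi
    apply IH
    · exact ⟨algebraMap K K⟮x⟯ i, by rw [← map_pow, hi, map_neg, map_one]⟩
    · intro b hb
      apply ha (i * Algebra.norm K b)
      rw [mul_pow, hi, ← map_pow, hb, ← adjoin.powerBasis_gen hint,
        Algebra.PowerBasis.norm_gen_eq_coeff_zero_minpoly]
      simp [minpoly_gen, hx]

lemma binomial_irreducible_aux {K : Type u} [Field K] {a : K} (m s : ℕ) (hm : Odd m)
    (hodd : ∀ p : ℕ, p.Prime → p ∣ m → ∀ b : K, b ^ p ≠ a)
    (hs2 : 1 ≤ s → ∀ b : K, b ^ 2 ≠ a)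
    (hs4 : 2 ≤ s → ∃ i : K, i ^ 2 = -1) :
    Irreducible (X ^ (2 ^ s * m) - C a) := by
  rcases Nat.eq_zero_or_pos s with rfl | hs
  · simpa using X_pow_sub_C_irreducible_of_odd hm hodd
  · have h2s : Irreducible (X ^ (2 ^ s) - C a) := by
      rcases eq_or_lt_of_le (show 1 ≤ s from hs) with h1 | h2
      · rw [← h1, pow_one]
        exact X_pow_sub_C_irreducible_of_prime Nat.prime_two (hs2 hs)
      · exact two_pow_aux s (hs4 h2) (hs2 hs)
    rw [mul_comm]
    apply X_pow_mul_sub_C_irreducible h2s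
    intro E _ _ x hx
    have hint : IsIntegral K x := not_not.mp fun h ↦ by
      simpa only [degree_zero, degree_X_pow_sub_C (pow_pos (by norm_num) s : 0 < 2 ^ s),
        WithBot.natCast_ne_bot] using congr_arg degree (hx.symm.trans (dif_neg h))
    apply X_pow_sub_C_irreducible_of_odd hm
    intro p hp hpm b hb
    have hpodd : Odd p := hp.odd_of_ne_two (by rintro rfl; exact (Nat.not_even_iff_odd.mpr hm) (even_iff_two_dvd.mpr hpm))
    apply hodd p hp hpm (-(Algebra.norm K b))
    rw [hpodd.neg_pow, ← map_pow, hb, ← adjoin.powerBasis_gen hint,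
      Algebra.PowerBasis.norm_gen_eq_coeff_zero_minpoly]
    have h0 : (0:ℕ) ≠ 2 ^ s := (pow_pos (by norm_num : (0:ℕ) < 2) s).ne
    simp [minpoly_gen, hx, h0,
      Even.neg_one_pow ((Nat.even_pow' hs.ne').mpr even_two)]

lemma nonsquare_mul_nonsquare {F : Type u} [Field F] [Fintype F] {x y : F}
    (hx : ¬ IsSquare x) (hy : ¬ IsSquare y) : IsSquare (x * y) := by
  classical
  have hx' : x ≠ 0 := fun h => hx (h ▸ IsSquare.zero)
  have hy' : y ≠ 0 := fun h => hy (h ▸ IsSquare.zero)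
  have h1 : quadraticChar F x = -1 := quadraticChar_neg_one_iff_not_isSquare.mpr hx
  have h2 : quadraticChar F y = -1 := quadraticChar_neg_one_iff_not_isSquare.mpr hy
  have : quadraticChar F (x * y) = 1 := by rw [map_mul, h1, h2]; ring
  exact (quadraticChar_one_iff_isSquare (mul_ne_zero hx' hy')).mp this

lemma not_irreducible_bad {F : Type u} [Field F] [Fintype F]
    (h3 : Fintype.card F % 4 = 3) {t : ℕ} (h4 : 4 ∣ t) (a : F) :
    ¬ Irreducible (X ^ t - C a) := by
  intro H
  obtain ⟨u, rfl⟩ := h4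
  have hu : 0 < u := by
    rcases Nat.eq_zero_or_pos u with rfl | h
    · exact absurd (ne_zero_of_irreducible_X_pow_sub_C H) (by simp)
    · exact h
  have ht1 : 4 * u ≠ 1 := by omega
  have ha0 : a ≠ 0 := ne_zero_of_irreducible_X_pow_sub_C' ht1 H
  have hnsq : ¬ IsSquare a := by
    rintro ⟨r, rfl⟩
    exact pow_ne_of_irreducible_X_pow_sub_C H (⟨2 * u, by ring⟩ : 2 ∣ 4 * u)
      (by norm_num) r (by ring)
  have hneg1 : ¬ IsSquare (-1 : F) := by
    rw [FiniteField.isSquare_neg_one_iff]; simp [h3]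
  obtain ⟨s, hs⟩ : IsSquare (-a) := by
    have := nonsquare_mul_nonsquare hneg1 hnsq
    rwa [neg_one_mul] at this
  have h2ne : (2 : F) ≠ 0 := by
    intro h2
    apply hneg1
    have h11 : (-1 : F) = 1 := by linear_combination -h2
    rw [h11]; exact IsSquare.one
  obtain ⟨e, he⟩ : ∃ e : F, e * e = s / 2 ∨ e * e = -(s / 2) := by
    by_cases h : IsSquare (s / 2)
    · obtain ⟨e, he⟩ := h; exact ⟨e, Or.inl he.symm⟩
    · have h' : IsSquare (-(s / 2)) := by
        have := nonsquare_mul_nonsquare hneg1 h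
        rwa [neg_one_mul] at this
      obtain ⟨e, he⟩ := h'; exact ⟨e, Or.inr he.symm⟩
  have hs2 : s ^ 2 = -a := by rw [pow_two]; exact hs.symm
  have he4 : e ^ 4 = (s / 2) ^ 2 := by
    rcases he with h | h <;> rw [show e ^ 4 = (e * e) ^ 2 by ring, h] <;> ring_nf
  have hae : a = -4 * e ^ 4 := by
    rw [he4, div_pow, hs2]
    field_simp
    ring
  set P : F[X] := X ^ (2 * u) - C (2 * e) * X ^ u + C (2 * e ^ 2) with hP
  set Q : F[X] := X ^ (2 * u) + C (2 * e) * X ^ u + C (2 * e ^ 2) with hQ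
  have hPQ : X ^ (4 * u) - C a = P * Q := by
    rw [hae, hP, hQ]
    simp only [map_mul, map_neg, map_ofNat, map_pow]
    ring
  have hdP : P.degree ≤ ((2 * u : ℕ) : WithBot ℕ) := by
    rw [hP]; compute_degree
    norm_cast
    simp [sup_le_iff]
    exact ⟨le_rfl, Nat.cast_le.mpr (Nat.le_mul_of_pos_left u two_pos)⟩
  have hdQ : Q.degree ≤ ((2 * u : ℕ) : WithBot ℕ) := by
    rw [hQ]; compute_degree
    norm_cast
    simp [sup_le_iff]
    exact ⟨le_rfl, Nat.cast_le.mpr (Nat.le_mul_of_pos_left u two_pos)⟩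
  have hdeg : (X ^ (4 * u) - C a).degree = ((4 * u : ℕ) : WithBot ℕ) :=
    degree_X_pow_sub_C (by omega) a
  have hlt : ¬ (((4 * u : ℕ) : WithBot ℕ) ≤ ((2 * u : ℕ) : WithBot ℕ)) := by
    rw [Nat.cast_le]; omega
  rcases H.isUnit_or_isUnit hPQ with hun | hun <;>
    rw [hPQ, degree_mul, degree_eq_zero_of_isUnit hun] at hdeg
  · rw [zero_add] at hdeg
    exact hlt (hdeg ▸ hdQ)
  · rw [add_zero] at hdeg
    exact hlt (hdeg ▸ hdP)

lemma count_coprime_range (r m : ℕ) :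
    ((Finset.range (r * m)).filter (fun k => r.Coprime k)).card = m * r.totient := by
  induction m with
  | zero => simp
  | succ m IH =>
    have h1 : Finset.range (r * (m + 1)) =
        Finset.range (r * m) ∪ Finset.Ico (r * m) (r * m + r) := by
      rw [mul_add, mul_one, Finset.range_eq_Ico, Finset.range_eq_Ico]
      exact (Finset.Ico_union_Ico_eq_Ico (Nat.zero_le _) le_self_add).symm
    rw [h1, Finset.filter_union, Finset.card_union_of_disjoint, IH,
      Nat.filter_coprime_Ico_eq_totient]
    · ring
    · refine Finset.disjoint_filter_filter ?_
      rw [Finset.range_eq_Ico]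
      exact Finset.Ico_disjoint_Ico_consecutive 0 (r * m) (r * m + r)

lemma dvd_rad_iff {t p : ℕ} (hp : p.Prime) : p ∣ rad t ↔ p ∈ t.primeFactors := by
  rw [rad, Prime.dvd_finset_prod_iff hp.prime]
  constructor
  · rintro ⟨q, hq, hpq⟩
    rwa [(Nat.prime_dvd_prime_iff_eq hp (Nat.prime_of_mem_primeFactors hq)).mp hpq]
  · intro h; exact ⟨p, h, dvd_rfl⟩

lemma rad_dvd_of_primes_dvd {t n : ℕ} (h : ∀ p ∈ t.primeFactors, p ∣ n) : rad t ∣ n :=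
  Finset.prod_primes_dvd n (fun p hp => (Nat.prime_of_mem_primeFactors hp).prime) h

lemma primeFactors_rad {t : ℕ} : (rad t).primeFactors = t.primeFactors :=
  Nat.primeFactors_prod (fun _ hp => Nat.prime_of_mem_primeFactors hp)

theorem stmt_1 (q : ℕ) (hq : IsPrimePow q) (F : Type*) [Field F] [Fintype F]
    (hcard : Fintype.card F = q) (t : ℕ) (ht : 1 ≤ t) :
    ((Nat.card {a : Fˣ // Irreducible (X ^ t - C (a : F))}) : ℚ) =
      if rad4 t ∣ q - 1 then (Nat.totient t : ℚ) / t * (q - 1) else 0 := by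
  classical
  have hq2 : 2 ≤ q := hq.two_le
  have hn' : Fintype.card Fˣ = q - 1 := by rw [Fintype.card_units, hcard]
  set n' : ℕ := q - 1 with hn'def
  have hn'pos : 0 < n' := by omega
  have ht0 : t ≠ 0 := by omega
  -- (A) irreducible → every prime of t divides n'
  have hA : ∀ (a : Fˣ), Irreducible (X ^ t - C (a : F)) → ∀ p ∈ t.primeFactors, p ∣ n' := by
    intro a H p hp
    by_contra hnd
    have hp' := Nat.prime_of_mem_primeFactors hp
    have hcop : (Nat.card Fˣ).Coprime p := by
      rw [Nat.card_eq_fintype_card, hn']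
      exact (hp'.coprime_iff_not_dvd.mpr hnd).symm
    obtain ⟨b, hb⟩ := (Nat.Coprime.pow_left_bijective hcop).surjective a
    exact pow_ne_of_irreducible_X_pow_sub_C H (Nat.dvd_of_mem_primeFactors hp) hp'.ne_one
      (b : F) (by have := congrArg Units.val hb; simpa using this)
  -- (B) irreducible → rad4 t ∣ n'
  have hB : ∀ (a : Fˣ), Irreducible (X ^ t - C (a : F)) → rad4 t ∣ n' := by
    intro a H
    have hrad : rad t ∣ n' := rad_dvd_of_primes_dvd (hA a H)
    rw [rad4]
    split_ifs with h4
    · -- need 4 ∣ n'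
      have h2t : 2 ∈ t.primeFactors :=
        Nat.mem_primeFactors.mpr ⟨Nat.prime_two, dvd_trans ⟨2, rfl⟩ h4, ht0⟩
      have h2n : 2 ∣ n' := hA a H 2 h2t
      have h4n : 4 ∣ n' := by
        by_contra h4n
        have hq3 : Fintype.card F % 4 = 3 := by rw [hcard]; omega
        exact not_irreducible_bad hq3 h4 (a : F) H
      set x : ℕ := ∏ p ∈ t.primeFactors.erase 2, p with hxdef
      have hx : rad t = 2 * x := (Finset.mul_prod_erase _ _ h2t).symm
      have hxodd : ¬ 2 ∣ x := by
        intro h2x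
        obtain ⟨r, hr, h2r⟩ := (Prime.dvd_finset_prod_iff Nat.prime_two.prime _).mp h2x
        have := (Nat.prime_dvd_prime_iff_eq Nat.prime_two
          (Nat.prime_of_mem_primeFactors (Finset.mem_of_mem_erase hr))).mp h2r
        exact (Finset.ne_of_mem_erase hr) this.symm
      have hcop : Nat.Coprime 4 x := by
        have : Nat.Coprime 2 x := Nat.prime_two.coprime_iff_not_dvd.mpr hxodd
        simpa using Nat.Coprime.pow_left 2 this
      have hxn : x ∣ n' := dvd_trans (Dvd.intro_left 2 hx.symm) hrad
      have : 4 * x ∣ n' := hcop.mul_dvd_of_dvd_of_dvd h4n hxn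
      calc 2 * rad t = 4 * x := by rw [hx]; ring
        _ ∣ n' := this
    · exact hrad
  by_cases hdvd : rad4 t ∣ n'
  swap
  · -- no irreducible binomials
    rw [if_neg hdvd]
    have : IsEmpty {a : Fˣ // Irreducible (X ^ t - C (a : F))} :=
      ⟨fun ⟨a, ha⟩ => hdvd (hB a ha)⟩
    rw [Nat.card_of_isEmpty]
    norm_num
  rw [if_pos hdvd]
  have hrdvd : rad t ∣ n' := dvd_trans (by rw [rad4]; split_ifs; exacts [⟨2, by ring⟩, dvd_rfl]) hdvd
  -- generator
  obtain ⟨g, hg⟩ := IsCyclic.exists_generator (α := Fˣ)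
  have hord : orderOf g = n' := by
    rw [orderOf_eq_card_of_forall_mem_zpowers hg, Nat.card_eq_fintype_card, hn']
  -- key characterization of p-th powers
  have key : ∀ (p k : ℕ), p.Prime → p ∣ n' → ((∃ b : Fˣ, b ^ p = g ^ k) ↔ p ∣ k) := by
    intro p k hp hpn
    constructor
    · rintro ⟨b, hb⟩
      have h1 : g ^ (k * (n' / p)) = 1 := by
        rw [pow_mul, ← hb, ← pow_mul, Nat.mul_div_cancel' hpn, ← hn', pow_card_eq_one]
      have h2 : n' ∣ k * (n' / p) := by
        have := orderOf_dvd_of_pow_eq_one h1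
        rwa [hord] at this
      have h3 : (n' / p) * p ∣ (n' / p) * k := by
        rw [Nat.div_mul_cancel hpn]
        rwa [mul_comm] at h2
      have hdp : 0 < n' / p := Nat.div_pos (Nat.le_of_dvd hn'pos hpn) hp.pos
      exact (mul_dvd_mul_iff_left hdp.ne').mp h3
    · rintro ⟨c, rfl⟩
      exact ⟨g ^ c, by rw [← pow_mul, mul_comm]⟩
  -- criterion
  have crit : ∀ (a : Fˣ), Irreducible (X ^ t - C (a : F)) ↔
      ∀ p ∈ t.primeFactors, ∀ b : Fˣ, b ^ p ≠ a := by
    intro a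
    constructor
    · intro H p hp b hb
      exact pow_ne_of_irreducible_X_pow_sub_C H (Nat.dvd_of_mem_primeFactors hp)
        (Nat.prime_of_mem_primeFactors hp).ne_one (b : F)
        (by have := congrArg Units.val hb; simpa using this)
    · intro hcond
      have hfu : ∀ (p : ℕ), p ∈ t.primeFactors → ∀ b : F, b ^ p ≠ (a : F) := by
        intro p hp b hb
        have hb0 : b ≠ 0 := by
          intro h
          rw [h, zero_pow (Nat.prime_of_mem_primeFactors hp).ne_zero] at hb
          exact a.ne_zero hb.symm
        refine hcond p hp (Units.mk0 b hb0) (Units.ext ?_)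
        simpa using hb
      set s : ℕ := t.factorization 2 with hsdef
      set m : ℕ := t / 2 ^ s with hmdef
      have htm : 2 ^ s * m = t := Nat.ordProj_mul_ordCompl_eq_self t 2
      have hmodd : Odd m := by
        have h2m : ¬ 2 ∣ m := by
          rw [hmdef, hsdef]
          exact Nat.not_dvd_ordCompl Nat.prime_two ht0
        rw [Nat.odd_iff]
        omega
      rw [← htm]
      apply binomial_irreducible_aux m s hmodd
      · intro p hp hpm b
        exact hfu p (Nat.mem_primeFactors.mpr
          ⟨hp, dvd_trans hpm (Nat.ordCompl_dvd t 2), ht0⟩) b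
      · intro hs1
        refine hfu 2 (Nat.mem_primeFactors.mpr ⟨Nat.prime_two, ?_, ht0⟩)
        exact dvd_trans (dvd_pow_self 2 (by omega)) (htm ▸ Dvd.intro m rfl)
      · intro hs2
        have h4t : 4 ∣ t := by
          refine dvd_trans ?_ (htm ▸ Dvd.intro m rfl)
          calc (4 : ℕ) = 2 ^ 2 := by norm_num
            _ ∣ 2 ^ s := pow_dvd_pow 2 hs2
        have h2rad : 2 ∣ rad t := (dvd_rad_iff Nat.prime_two).mpr
          (Nat.mem_primeFactors.mpr ⟨Nat.prime_two, dvd_trans ⟨2, rfl⟩ h4t, ht0⟩)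
        have h4n : 4 ∣ n' := by
          obtain ⟨x, hx⟩ := h2rad
          have : 2 * rad t ∣ n' := by rw [rad4, if_pos h4t] at hdvd; exact hdvd
          obtain ⟨y, hy⟩ := this
          exact ⟨x * y, by rw [hy, hx]; ring⟩
        have : IsSquare (-1 : F) := by
          rw [FiniteField.isSquare_neg_one_iff, hcard]
          omega
        obtain ⟨i, hi⟩ := this
        exact ⟨i, by rw [pow_two, ← hi]⟩
  -- counting
  set r : ℕ := rad t with hrdef
  set m' : ℕ := n' / r with hm'def
  have hrpos : 0 < r := Finset.prod_pos (fun p hp => (Nat.prime_of_mem_primeFactors hp).pos)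
  have hrm : r * m' = n' := Nat.mul_div_cancel' hrdvd
  have hcount : Nat.card {a : Fˣ // Irreducible (X ^ t - C (a : F))} = m' * r.totient := by
    rw [Nat.card_eq_fintype_card, Fintype.card_subtype, ← count_coprime_range r m']
    apply Finset.card_bij (fun k _ => g ^ k) ?_ ?_ ?_ |>.symm
    · -- maps into
      intro k hk
      rw [Finset.mem_filter] at hk
      obtain ⟨hkr, hkcop⟩ := hk
      rw [Finset.mem_filter]
      refine ⟨Finset.mem_univ _, (crit _).mpr ?_⟩
      intro p hp b hb
      have hp' := Nat.prime_of_mem_primeFactors hp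
      have hpr : p ∣ r := (dvd_rad_iff hp').mpr hp
      have hpk : p ∣ k := (key p k hp' (dvd_trans hpr hrdvd)).mp ⟨b, hb⟩
      exact hp'.ne_one (Nat.eq_one_of_dvd_coprimes hkcop hpr hpk)
    · -- injective
      intro k1 hk1 k2 hk2 heq
      rw [Finset.mem_filter, Finset.mem_range, hrm] at hk1 hk2
      have := pow_eq_pow_iff_modEq.mp heq
      rw [hord] at this
      rwa [Nat.ModEq, Nat.mod_eq_of_lt hk1.1, Nat.mod_eq_of_lt hk2.1] at this
    · -- surjective
      intro a ha
      rw [Finset.mem_filter] at ha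
      obtain ⟨i, hi⟩ := Subgroup.mem_zpowers_iff.mp (hg a)
      set k : ℕ := (i % (n' : ℤ)).toNat with hkdef
      have hin : (0 : ℤ) < (n' : ℤ) := by exact_mod_cast hn'pos
      have hknn : (0 : ℤ) ≤ i % (n' : ℤ) := Int.emod_nonneg i hin.ne'
      have hgk : g ^ k = a := by
        have : g ^ ((i % (n' : ℤ))) = a := by
          rw [← hord, zpow_mod_orderOf, hi]
        rw [← this, hkdef, ← zpow_natCast, Int.toNat_of_nonneg hknn]
      have hklt : k < n' := by
        have := Int.emod_lt_of_pos i hin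
        omega
      refine ⟨k, Finset.mem_filter.mpr ⟨Finset.mem_range.mpr (by rwa [hrm]), ?_⟩, hgk⟩
      by_contra hncop
      obtain ⟨p, hp, hpr, hpk⟩ := Nat.Prime.not_coprime_iff_dvd.mp hncop
      have hp' : p.Prime := hp
      obtain ⟨b, hb⟩ := (key p k hp' (dvd_trans hpr hrdvd)).mpr hpk
      exact (crit a).mp ha.2 p ((dvd_rad_iff hp').mp hpr) b (hb.trans hgk)
  rw [hcount]
  -- final arithmetic
  have hpf : r.primeFactors = t.primeFactors := primeFactors_rad
  have hrprod : (∏ p ∈ t.primeFactors, p) = r := by rw [hrdef, rad]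
  have hphir : r.totient * r = r * ∏ p ∈ t.primeFactors, (p - 1) := by
    have := Nat.totient_mul_prod_primeFactors r
    rwa [hpf, hrprod] at this
  have hphir' : r.totient = ∏ p ∈ t.primeFactors, (p - 1) :=
    Nat.eq_of_mul_eq_mul_left hrpos (by rw [mul_comm r r.totient]; exact hphir)
  have hphit : t.totient * r = t * r.totient := by
    have := Nat.totient_mul_prod_primeFactors t
    rw [hrprod] at this
    rw [this, hphir']
  have htQ : (t : ℚ) ≠ 0 := by exact_mod_cast ht0
  have hrQ : (r : ℚ) ≠ 0 := by exact_mod_cast hrpos.ne'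
  have hq1 : ((q : ℚ) - 1) = (n' : ℚ) := by
    rw [hn'def]
    push_cast [Nat.cast_sub (by omega : 1 ≤ q)]
    ring
  rw [hq1, ← hrm]
  have hid : (t.totient : ℚ) * r = t * r.totient := by exact_mod_cast hphit
  push_cast
  field_simp
  linear_combination (-(m' : ℚ)) * hid
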